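/- (Lemma 3) For every integer n ≥ 2, c(n) = 2·a(n−1) + c(n−1), where a(m) is the number of permutations of {1,…,m} with no violation, and c(m) is the number of permutations of {1,…,m} with exactly one violation which moreover occurs at the last position i = m−1. -/

import Mathlib

/-- Index `i` is a violation of the permutation `π` of `{0,…,m-1}`
(equivalently `{1,…,m}`): `|π (i+1) - π i| = 1`. -/
def IsViolation (m : ℕ) (π : Equiv.Perm (Fin m)) (i : Fin m) : Prop :=
  ∃ j : Fin m, (j : ℕ) = (i : ℕ) + 1 ∧
    |((π j : ℕ) : ℤ) - ((π i : ℕ) : ℤ)| = 1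

instance (m : ℕ) (π : Equiv.Perm (Fin m)) (i : Fin m) :
    Decidable (IsViolation m π i) := by unfold IsViolation; infer_instance

/-- The number of violations of `π`. -/
def violCount (m : ℕ) (π : Equiv.Perm (Fin m)) : ℕ :=
  (Finset.univ.filter fun i : Fin m => IsViolation m π i).card

/-- The set of permutations of `{1,…,m}` with no violation, counted by `a(m)`. -/
def noViol (m : ℕ) : Finset (Equiv.Perm (Fin m)) :=
  Finset.univ.filter fun π => violCount m π = 0

/-- The set of permutations of `{1,…,m}` with exactly one violation, counted by `b(m)`. -/
def oneViol (m : ℕ) : Finset (Equiv.Perm (Fin m)) :=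
  Finset.univ.filter fun π => violCount m π = 1

/-- The set of permutations of `{1,…,m}` with exactly one violation, occurring at the
last position `i = m - 1` (in `1`-based indexing, i.e. between the last two entries);
counted by `c(m)`. -/
def oneViolLast (m : ℕ) : Finset (Equiv.Perm (Fin m)) :=
  Finset.univ.filter fun π => violCount m π = 1 ∧
    ∃ i : Fin m, (i : ℕ) + 2 = m ∧ IsViolation m π i

lemma abs_sub_one_iff (a b : ℕ) : |((a:ℤ)) - (b:ℤ)| = 1 ↔ (a = b + 1 ∨ b = a + 1) := by
  rw [abs_eq (by norm_num : (0:ℤ) ≤ 1)]; omega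

lemma viol_iff {n : ℕ} (π : Equiv.Perm (Fin n)) (i j : Fin n) (h : (j:ℕ) = (i:ℕ) + 1) :
    IsViolation n π i ↔ ((π j : ℕ) = (π i : ℕ) + 1 ∨ (π i : ℕ) = (π j : ℕ) + 1) := by
  constructor
  · rintro ⟨j', hj', habs⟩
    have hj : j' = j := Fin.ext (by omega)
    subst hj
    rwa [abs_sub_one_iff] at habs
  · intro hcase
    exact ⟨j, h, (abs_sub_one_iff _ _).mpr hcase⟩

lemma not_viol_last {n : ℕ} (π : Equiv.Perm (Fin (n+1))) :
    ¬ IsViolation (n+1) π (Fin.last n) := by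
  rintro ⟨j, hj, -⟩
  have := j.isLt
  simp [Fin.val_last] at hj
  omega

variable {m : ℕ}

lemma val_succAbove (v : Fin (m+2)) (x : Fin (m+1)) :
    ((v.succAbove x : Fin (m+2)) : ℕ) = if (x:ℕ) < (v:ℕ) then (x:ℕ) else (x:ℕ) + 1 := by
  rw [Fin.succAbove]
  by_cases h : (x:ℕ) < (v:ℕ)
  · rw [if_pos (by simpa [Fin.lt_def] using h), if_pos h]; rfl
  · rw [if_neg (by simpa [Fin.lt_def] using h), if_neg h]; rfl

def insFun (σ : Equiv.Perm (Fin (m+1))) (v : Fin (m+2)) : Fin (m+2) → Fin (m+2) :=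
  Fin.snoc (fun j => v.succAbove (σ j)) v

lemma insFun_castSucc (σ : Equiv.Perm (Fin (m+1))) (v : Fin (m+2)) (j : Fin (m+1)) :
    insFun σ v j.castSucc = v.succAbove (σ j) := Fin.snoc_castSucc _ _ _

lemma insFun_last (σ : Equiv.Perm (Fin (m+1))) (v : Fin (m+2)) :
    insFun σ v (Fin.last (m+1)) = v := Fin.snoc_last _ _

lemma insFun_injective (σ : Equiv.Perm (Fin (m+1))) (v : Fin (m+2)) :
    Function.Injective (insFun σ v) := by
  intro x y hxy
  induction x using Fin.lastCases with
  | last =>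
    induction y using Fin.lastCases with
    | last => rfl
    | cast y =>
      rw [insFun_last, insFun_castSucc] at hxy
      exact absurd hxy.symm (Fin.succAbove_ne v _)
  | cast x =>
    induction y using Fin.lastCases with
    | last =>
      rw [insFun_last, insFun_castSucc] at hxy
      exact absurd hxy (Fin.succAbove_ne v _)
    | cast y =>
      rw [insFun_castSucc, insFun_castSucc] at hxy
      exact congrArg _ (σ.injective (Fin.succAbove_right_injective hxy))

noncomputable def Ins (σ : Equiv.Perm (Fin (m+1))) (v : Fin (m+2)) : Equiv.Perm (Fin (m+2)) :=
  Equiv.ofBijective _ ((Finite.injective_iff_bijective).mp (insFun_injective σ v))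

lemma Ins_apply (σ : Equiv.Perm (Fin (m+1))) (v : Fin (m+2)) (i : Fin (m+2)) :
    Ins σ v i = insFun σ v i := rfl

lemma Ins_injective :
    Function.Injective (fun p : Equiv.Perm (Fin (m+1)) × Fin (m+2) => Ins p.1 p.2) := by
  rintro ⟨σ, v⟩ ⟨τ, w⟩ h
  simp only at h
  have hv : v = w := by
    have := congrArg (fun e : Equiv.Perm (Fin (m+2)) => e (Fin.last (m+1))) h
    simpa [Ins_apply, insFun_last] using this
  subst hv
  have hστ : σ = τ := by
    apply Equiv.ext; intro j
    have := congrArg (fun e : Equiv.Perm (Fin (m+2)) => e (Fin.castSucc j)) h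
    simp only [Ins_apply, insFun_castSucc] at this
    exact Fin.succAbove_right_injective this
  rw [hστ]

lemma Ins_surjective :
    Function.Surjective (fun p : Equiv.Perm (Fin (m+1)) × Fin (m+2) => Ins p.1 p.2) := by
  have hcard : Fintype.card (Equiv.Perm (Fin (m+1)) × Fin (m+2))
      = Fintype.card (Equiv.Perm (Fin (m+2))) := by
    simp [Fintype.card_perm, Nat.factorial_succ]
    ring
  exact ((Fintype.bijective_iff_injective_and_card _).mpr ⟨Ins_injective, hcard⟩).2

lemma g_viol (v a b : ℕ) :
    ((if a < v then a else a+1) = (if b < v then b else b+1) + 1 ∨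
     (if b < v then b else b+1) = (if a < v then a else a+1) + 1)
      ↔ ((a = b + 1 ∨ b = a + 1) ∧ v ≠ max a b) := by
  split_ifs <;> omega

lemma g_end (v a : ℕ) :
    (v = (if a < v then a else a+1) + 1 ∨ (if a < v then a else a+1) = v + 1)
      ↔ (v = a ∨ v = a + 1) := by
  split_ifs <;> omega

/-- violation of the inserted perm at the (new) last position -/
lemma ins_viol_last (σ : Equiv.Perm (Fin (m+1))) (v : Fin (m+2)) :
    IsViolation (m+2) (Ins σ v) (Fin.castSucc (Fin.last m))
      ↔ ((v:ℕ) = (σ (Fin.last m) : ℕ) ∨ (v:ℕ) = (σ (Fin.last m) : ℕ) + 1) := by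
  rw [viol_iff _ _ (Fin.last (m+1)) (by simp)]
  rw [Ins_apply, Ins_apply, insFun_last, insFun_castSucc, val_succAbove]
  exact g_end _ _

/-- violation of the inserted perm at an old position -/
lemma ins_viol_mid (σ : Equiv.Perm (Fin (m+1))) (v : Fin (m+2)) (i j : Fin (m+1))
    (h : (j:ℕ) = (i:ℕ) + 1) :
    IsViolation (m+2) (Ins σ v) (Fin.castSucc i)
      ↔ (IsViolation (m+1) σ i ∧ (v:ℕ) ≠ max (σ i : ℕ) (σ j : ℕ)) := by
  rw [viol_iff _ _ (Fin.castSucc j) (by simp [h]),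
    viol_iff _ _ j h,
    Ins_apply, Ins_apply, insFun_castSucc, insFun_castSucc, val_succAbove, val_succAbove]
  rw [Nat.max_comm]; exact g_viol _ _ _

lemma mem_noViol_iff {n : ℕ} (σ : Equiv.Perm (Fin n)) :
    σ ∈ noViol n ↔ ∀ i, ¬ IsViolation n σ i := by
  simp [noViol, violCount, Finset.card_eq_zero, Finset.filter_eq_empty_iff]

lemma mem_oneViolLast_iff {n : ℕ} (π : Equiv.Perm (Fin n)) :
    π ∈ oneViolLast n ↔ ∃ i : Fin n, (i:ℕ) + 2 = n ∧ IsViolation n π i ∧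
      ∀ k, IsViolation n π k → k = i := by
  rw [oneViolLast, Finset.mem_filter]
  simp only [Finset.mem_univ, true_and, violCount]
  constructor
  · rintro ⟨hc, i, hi, hv⟩
    obtain ⟨x, hx⟩ := Finset.card_eq_one.mp hc
    have hix : i = x := by
      have : i ∈ Finset.univ.filter fun k => IsViolation n π k := by
        simp [hv]
      rwa [hx, Finset.mem_singleton] at this
    refine ⟨i, hi, hv, fun k hk => ?_⟩
    have : k ∈ Finset.univ.filter fun k => IsViolation n π k := by simp [hk]
    rw [hx, Finset.mem_singleton] at this
    rw [this, hix]
  · rintro ⟨i, hi, hv, huniq⟩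
    have hset : (Finset.univ.filter fun k => IsViolation n π k) = {i} := by
      ext k; simp only [Finset.mem_filter, Finset.mem_univ, true_and, Finset.mem_singleton]
      exact ⟨huniq k, fun h => h ▸ hv⟩
    exact ⟨by rw [hset]; simp, i, hi, hv⟩

def Cond (σ : Equiv.Perm (Fin (m+1))) (v : Fin (m+2)) : Prop :=
  ((v:ℕ) = (σ (Fin.last m) : ℕ) ∨ (v:ℕ) = (σ (Fin.last m) : ℕ) + 1) ∧
  ∀ i j : Fin (m+1), (j:ℕ) = (i:ℕ) + 1 → IsViolation (m+1) σ i →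
    (v:ℕ) = max ((σ i : ℕ)) ((σ j : ℕ))

lemma ins_mem_iff (σ : Equiv.Perm (Fin (m+1))) (v : Fin (m+2)) :
    Ins σ v ∈ oneViolLast (m+2) ↔ Cond σ v := by
  rw [mem_oneViolLast_iff]
  constructor
  · rintro ⟨i, hi2, hv, huniq⟩
    have hie : i = Fin.castSucc (Fin.last m) := Fin.ext (by simp; omega)
    subst hie
    refine ⟨(ins_viol_last σ v).mp hv, ?_⟩
    intro i' j' hj' hσv
    by_contra hne
    have hvmid : IsViolation (m+2) (Ins σ v) (Fin.castSucc i') :=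
      (ins_viol_mid σ v i' j' hj').mpr ⟨hσv, hne⟩
    have heq := huniq _ hvmid
    have hval : (i':ℕ) = m := by
      have := congrArg Fin.val heq; simpa using this
    have := j'.isLt; omega
  · rintro ⟨hE, hK⟩
    refine ⟨Fin.castSucc (Fin.last m), by simp, (ins_viol_last σ v).mpr hE, ?_⟩
    intro k hk
    have hklt : (k:ℕ) < m + 1 := by
      by_contra h
      have hkl : k = Fin.last (m+1) := Fin.ext (by have := k.isLt; simp; omega)
      rw [hkl] at hk; exact not_viol_last _ hk
    by_cases hkm : (k:ℕ) = m
    · exact Fin.ext (by simpa)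
    · exfalso
      have hk' : k = Fin.castSucc (⟨(k:ℕ), hklt⟩ : Fin (m+1)) := Fin.ext rfl
      rw [hk', ins_viol_mid σ v ⟨(k:ℕ), hklt⟩ ⟨(k:ℕ)+1, by omega⟩ rfl] at hk
      exact hk.2 (hK _ _ rfl hk.1)

instance (σ : Equiv.Perm (Fin (m+1))) (v : Fin (m+2)) : Decidable (Cond σ v) := by
  unfold Cond; infer_instance

lemma fiber_card (σ : Equiv.Perm (Fin (m+1))) :
    (Finset.univ.filter fun v : Fin (m+2) => Cond σ v).card
      = if σ ∈ noViol (m+1) then 2 else if σ ∈ oneViolLast (m+1) then 1 else 0 := by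
  by_cases h0 : σ ∈ noViol (m+1)
  · rw [if_pos h0]
    have hnv := (mem_noViol_iff σ).mp h0
    have halt : (σ (Fin.last m) : ℕ) < m + 1 := (σ (Fin.last m)).isLt
    have hfe : (Finset.univ.filter fun v : Fin (m+2) => Cond σ v)
        = {(⟨(σ (Fin.last m) : ℕ), by omega⟩ : Fin (m+2)),
           (⟨(σ (Fin.last m) : ℕ) + 1, by omega⟩ : Fin (m+2))} := by
      ext v
      simp only [Finset.mem_filter, Finset.mem_univ, true_and, Finset.mem_insert,
        Finset.mem_singleton]
      constructor
      · rintro ⟨hE, -⟩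
        rcases hE with h | h
        · left; exact Fin.ext h
        · right; exact Fin.ext h
      · rintro (rfl | rfl)
        · exact ⟨Or.inl rfl, fun i j hj hv => absurd hv (hnv i)⟩
        · exact ⟨Or.inr rfl, fun i j hj hv => absurd hv (hnv i)⟩
    rw [hfe, Finset.card_pair (by
      intro h; have := congrArg Fin.val h; simp at this)]
  · by_cases h1 : σ ∈ oneViolLast (m+1)
    · rw [if_neg h0, if_pos h1]
      obtain ⟨i₀, hi₀, hv₀, huniq⟩ := (mem_oneViolLast_iff σ).mp h1
      have hj₀ : ((Fin.last m : Fin (m+1)) : ℕ) = (i₀:ℕ) + 1 := by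
        simp [Fin.val_last]; omega
      have hvals := (viol_iff σ i₀ (Fin.last m) hj₀).mp hv₀
      have hM : max (σ i₀ : ℕ) (σ (Fin.last m) : ℕ) < m + 1 := by
        have := (σ i₀).isLt; have := (σ (Fin.last m)).isLt; omega
      have hfe : (Finset.univ.filter fun v : Fin (m+2) => Cond σ v)
          = {(⟨max (σ i₀ : ℕ) (σ (Fin.last m) : ℕ), by omega⟩ : Fin (m+2))} := by
        ext v
        simp only [Finset.mem_filter, Finset.mem_univ, true_and, Finset.mem_singleton]
        constructor
        · rintro ⟨hE, hK⟩
          exact Fin.ext (hK i₀ (Fin.last m) hj₀ hv₀)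
        · rintro rfl
          constructor
          · show max (σ i₀ : ℕ) (σ (Fin.last m) : ℕ) = _ ∨
              max (σ i₀ : ℕ) (σ (Fin.last m) : ℕ) = _
            omega
          · intro i j hj hv
            have hii : i = i₀ := huniq i hv
            subst hii
            have hjj : j = Fin.last m := Fin.ext (by omega)
            subst hjj
            rfl
      rw [hfe, Finset.card_singleton]
    · rw [if_neg h0, if_neg h1, Finset.card_eq_zero, Finset.filter_eq_empty_iff]
      intro v _
      rintro ⟨hE, hK⟩
      rw [mem_noViol_iff] at h0
      push_neg at h0
      obtain ⟨i, hvi⟩ := h0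
      apply h1
      rw [mem_oneViolLast_iff]
      have key : ∀ k, IsViolation (m+1) σ k → (k:ℕ) + 2 = m + 1 := by
        intro k hk
        obtain ⟨j, hj, habs⟩ := hk
        rw [abs_sub_one_iff] at habs
        have hKk := hK k j hj ⟨j, hj, (abs_sub_one_iff _ _).mpr habs⟩
        have hone : (σ k : ℕ) = (σ (Fin.last m) : ℕ) ∨ (σ j : ℕ) = (σ (Fin.last m) : ℕ) := by
          rcases Nat.le_total (σ k : ℕ) (σ j : ℕ) with h | h
          · rw [max_eq_right h] at hKk; omega
          · rw [max_eq_left h] at hKk; omega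
        have hpos : k = Fin.last m ∨ j = Fin.last m := by
          rcases hone with h | h
          · left; exact σ.injective (Fin.ext h)
          · right; exact σ.injective (Fin.ext h)
        rcases hpos with h | h
        · exfalso
          have := j.isLt
          rw [h] at hj
          simp [Fin.val_last] at hj
          omega
        · rw [h] at hj
          simp [Fin.val_last] at hj
          omega
      have hki := key i hvi
      refine ⟨i, hki, hvi, fun k hk => ?_⟩
      have := key k hk
      exact Fin.ext (by omega)

lemma sum_ind {α : Type*} [Fintype α] [DecidableEq α] (t : Finset α) :
    (∑ x : α, (if x ∈ t then (1:ℕ) else 0)) = t.card := by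
  rw [Finset.sum_ite_mem, Finset.univ_inter, Finset.sum_const, smul_eq_mul, mul_one]

/-- Lemma 3: for `n ≥ 2`, `c(n) = 2·a(n-1) + c(n-1)`. -/
theorem lemma3 (n : ℕ) (hn : 2 ≤ n) :
    (oneViolLast n).card = 2 * (noViol (n - 1)).card + (oneViolLast (n - 1)).card := by
  obtain ⟨m, rfl⟩ : ∃ m, n = m + 2 := ⟨n - 2, by omega⟩
  have hsub : m + 2 - 1 = m + 1 := rfl
  rw [hsub]
  have h1 : oneViolLast (m+2)
      = (Finset.univ.filter fun p : Equiv.Perm (Fin (m+1)) × Fin (m+2) => Cond p.1 p.2).image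
          (fun p => Ins p.1 p.2) := by
    ext π
    simp only [Finset.mem_image]
    constructor
    · intro hπ
      obtain ⟨p, rfl⟩ := Ins_surjective π
      exact ⟨p, Finset.mem_filter.mpr ⟨Finset.mem_univ _, (ins_mem_iff _ _).mp hπ⟩, rfl⟩
    · rintro ⟨p, hp, rfl⟩
      exact (ins_mem_iff _ _).mpr (Finset.mem_filter.mp hp).2
  rw [h1, Finset.card_image_of_injective _ Ins_injective,
    Finset.card_eq_sum_card_fiberwise (f := Prod.fst) (t := Finset.univ)
      (fun x _ => Finset.mem_univ _)]
  have hfib : ∀ σ : Equiv.Perm (Fin (m+1)),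
      ((Finset.univ.filter fun p : Equiv.Perm (Fin (m+1)) × Fin (m+2) =>
          Cond p.1 p.2).filter fun p => p.1 = σ).card
        = (Finset.univ.filter fun v : Fin (m+2) => Cond σ v).card := by
    intro σ
    apply Finset.card_bij (fun p _ => p.2)
    · intro p hp
      simp only [Finset.mem_filter, Finset.mem_univ, true_and] at hp ⊢
      rw [← hp.2]; exact hp.1
    · intro p hp q hq hpq
      simp only [Finset.mem_filter, Finset.mem_univ, true_and] at hp hq
      exact Prod.ext (hp.2.trans hq.2.symm) hpq
    · intro v hv
      simp only [Finset.mem_filter, Finset.mem_univ, true_and] at hv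
      exact ⟨(σ, v), Finset.mem_filter.mpr ⟨Finset.mem_filter.mpr
        ⟨Finset.mem_univ _, hv⟩, rfl⟩, rfl⟩
  rw [Finset.sum_congr rfl (fun σ _ => by rw [hfib σ, fiber_card σ])]
  have hsplit : ∀ σ : Equiv.Perm (Fin (m+1)),
      (if σ ∈ noViol (m+1) then 2 else if σ ∈ oneViolLast (m+1) then 1 else 0)
        = 2 * (if σ ∈ noViol (m+1) then (1:ℕ) else 0)
          + (if σ ∈ oneViolLast (m+1) then (1:ℕ) else 0) := by
    intro σ
    by_cases h0 : σ ∈ noViol (m+1)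
    · have h1' : σ ∉ oneViolLast (m+1) := by
        intro h1'
        rw [mem_noViol_iff] at h0
        obtain ⟨i, _, hv, _⟩ := (mem_oneViolLast_iff σ).mp h1'
        exact h0 i hv
      simp [h0, h1']
    · by_cases h1' : σ ∈ oneViolLast (m+1) <;> simp [h0, h1']
  rw [Finset.sum_congr rfl (fun σ _ => hsplit σ), Finset.sum_add_distrib,
    ← Finset.mul_sum, sum_ind, sum_ind]
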